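/- Every w-bubble u satisfies w·u ≤ (max(w_1, …, w_n) − 2) · Σ_{i=1}^n w_i. -/

import Mathlib

/-- The weighted dot product `w · u = ∑ i, w i * u i`. -/
def dotW {n : ℕ} (w u : Fin n → ℕ) : ℕ := ∑ i, w i * u i

/-- `d_w`, the least common multiple of the weights. -/
def lcmW {n : ℕ} (w : Fin n → ℕ) : ℕ := Finset.univ.lcm w

/-- `u` is a `w`-bubble: `w · u ≥ 2 d_w` and there is no `v ⪯ u` with `w · v = d_w`. -/
def IsBubble {n : ℕ} (w u : Fin n → ℕ) : Prop :=
  2 * lcmW w ≤ dotW w u ∧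
    ¬ ∃ v : Fin n → ℕ, (∀ i, v i ≤ u i) ∧ dotW w v = lcmW w

section Aux

variable {n : ℕ}

lemma exists_lt_of_sum_lt' (x u : Fin n → ℕ) (h : ∑ j, x j < ∑ j, u j) :
    ∃ j, x j < u j := by
  by_contra h'
  push_neg at h'
  exact absurd (Finset.sum_le_sum fun j _ => h' j) (not_le.2 h)

/-- A chain of subvectors of `u` taking `s` coins for each `s ≤ t`. -/
lemma chain_exists (u : Fin n → ℕ) (t : ℕ) (ht : t ≤ ∑ j, u j) :
    ∃ g : ℕ → Fin n → ℕ,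
      (∀ s s', s ≤ s' → ∀ j, g s j ≤ g s' j) ∧
      (∀ s, s ≤ t → (∀ j, g s j ≤ u j) ∧ (∑ j, g s j = s)) := by
  induction t with
  | zero =>
    refine ⟨fun _ _ => 0, fun _ _ _ _ => le_rfl, ?_⟩
    intro s hs
    interval_cases s
    exact ⟨fun j => Nat.zero_le _, by simp⟩
  | succ t ih =>
    obtain ⟨g, hmono, hprop⟩ := ih (le_trans (Nat.le_succ t) ht)
    have hgt := hprop t le_rfl
    have hlt : ∑ j, g t j < ∑ j, u j := by
      rw [hgt.2]; exact lt_of_lt_of_le (Nat.lt_succ_self t) ht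
    obtain ⟨j₀, hj₀⟩ := exists_lt_of_sum_lt' (g t) u hlt
    refine ⟨fun s => if s ≤ t then g s else Function.update (g t) j₀ (g t j₀ + 1),
      ?_, ?_⟩
    · intro s s' hss j
      dsimp only
      by_cases hs' : s' ≤ t
      · rw [if_pos (le_trans hss hs'), if_pos hs']
        exact hmono s s' hss j
      · rw [if_neg hs']
        by_cases hs : s ≤ t
        · rw [if_pos hs]
          refine le_trans (hmono s t hs j) ?_
          by_cases hj : j = j₀
          · subst hj; simp
          · simp [Function.update_of_ne hj]
        · rw [if_neg hs]
    · intro s hs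
      dsimp only
      by_cases hst : s ≤ t
      · rw [if_pos hst]
        exact hprop s hst
      · have hseq : s = t + 1 := by omega
        rw [if_neg hst]
        constructor
        · intro j
          by_cases hj : j = j₀
          · subst hj; simpa [Function.update_self] using hj₀
          · simp only [Function.update_of_ne hj]; exact (hgt.1 j)
        · rw [Finset.sum_update_of_mem (Finset.mem_univ j₀), hseq]
          have h3 := hgt.2
          rw [← Finset.sum_erase_add Finset.univ _ (Finset.mem_univ j₀),
            Finset.erase_eq] at h3
          omega

/-- Extraction: from a pool of at least `a` coins (weights in `[1, M]`) one can
extract a nonempty subpool whose weighted sum is `a * y` with `1 ≤ y ≤ M`. -/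
lemma extract (w u : Fin n → ℕ) (a M : ℕ) (ha : 0 < a)
    (hw : ∀ j, 0 < w j) (hM : ∀ j, w j ≤ M) (hN : a ≤ ∑ j, u j) :
    ∃ (x : Fin n → ℕ) (y : ℕ), (∀ j, x j ≤ u j) ∧ 1 ≤ y ∧ y ≤ M ∧
      ∑ j, w j * x j = a * y := by
  obtain ⟨g, hmono, hprop⟩ := chain_exists u a hN
  have main : ∀ s s' : ℕ, s < s' → s' ≤ a →
      (∑ j, w j * g s j) % a = (∑ j, w j * g s' j) % a →
      ∃ (x : Fin n → ℕ) (y : ℕ), (∀ j, x j ≤ u j) ∧ 1 ≤ y ∧ y ≤ M ∧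
        ∑ j, w j * x j = a * y := by
    intro s s' hss hs'a hmod
    have hs := hprop s (le_trans (le_of_lt hss) hs'a)
    have hs' := hprop s' hs'a
    have hmono' : ∀ j, g s j ≤ g s' j := hmono s s' (le_of_lt hss)
    set x : Fin n → ℕ := fun j => g s' j - g s j with hx
    have hxle : ∀ j, x j ≤ u j := fun j => le_trans (Nat.sub_le _ _) (hs'.1 j)
    have hxsum : ∑ j, x j = s' - s := by
      have : ∑ j, (x j + g s j) = ∑ j, g s' j :=
        Finset.sum_congr rfl fun j _ => by simp [hx, Nat.sub_add_cancel (hmono' j)]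
      rw [Finset.sum_add_distrib, hs.2, hs'.2] at this
      omega
    have hwxsum : ∑ j, w j * x j + ∑ j, w j * g s j = ∑ j, w j * g s' j := by
      rw [← Finset.sum_add_distrib]
      refine Finset.sum_congr rfl fun j _ => ?_
      rw [← Nat.mul_add, Nat.sub_add_cancel (hmono' j)]
    have hle : ∑ j, w j * g s j ≤ ∑ j, w j * g s' j :=
      Finset.sum_le_sum fun j _ => Nat.mul_le_mul_left _ (hmono' j)
    have hdvd : a ∣ ∑ j, w j * x j := by
      have hmodeq : (∑ j, w j * g s j) ≡ (∑ j, w j * g s' j) [MOD a] := hmod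
      have := (Nat.modEq_iff_dvd' hle).mp hmodeq
      have heq : ∑ j, w j * g s' j - ∑ j, w j * g s j = ∑ j, w j * x j := by omega
      rwa [heq] at this
    obtain ⟨y, hy⟩ := hdvd
    have hxpos : 1 ≤ ∑ j, x j := by omega
    have hwx1 : 1 ≤ ∑ j, w j * x j :=
      le_trans hxpos (Finset.sum_le_sum fun j _ => Nat.le_mul_of_pos_left _ (hw j))
    have hwxM : ∑ j, w j * x j ≤ a * M := by
      calc ∑ j, w j * x j ≤ ∑ j, M * x j :=
            Finset.sum_le_sum fun j _ => Nat.mul_le_mul_right _ (hM j)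
        _ = M * ∑ j, x j := by rw [Finset.mul_sum]
        _ ≤ M * a := Nat.mul_le_mul_left _ (by omega)
        _ = a * M := Nat.mul_comm _ _
    refine ⟨x, y, hxle, ?_, ?_, hy⟩
    · rcases Nat.eq_zero_or_pos y with h0 | h1
      · rw [h0, Nat.mul_zero] at hy; omega
      · exact h1
    · have : a * y ≤ a * M := by omega
      exact Nat.le_of_mul_le_mul_left this ha
  set f : Fin (a + 1) → Fin a := fun s => ⟨(∑ j, w j * g s j) % a, Nat.mod_lt _ ha⟩
  obtain ⟨s, s', hne, hfeq⟩ := Fintype.exists_ne_map_eq_of_card_lt f (by simp)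
  have hval : (∑ j, w j * g s j) % a = (∑ j, w j * g s' j) % a := by
    simpa [f, Fin.ext_iff] using hfeq
  rcases lt_or_gt_of_ne hne with h | h
  · exact main s s' h (Nat.lt_succ_iff.mp s'.isLt) hval
  · exact main s' s h (Nat.lt_succ_iff.mp s.isLt) hval.symm

/-- Main combinatorial lemma: with a budget of `c ≥ M - 1` coins of value `a` plus
a pool `u`, any target `a * Q` below the total (with slack `a * M`) is reachable. -/
lemma reach_lemma (w : Fin n → ℕ) (a M c : ℕ) (ha : 0 < a) (hM1 : 0 < M)
    (hw : ∀ j, 0 < w j) (hMle : ∀ j, w j ≤ M) (hc : M ≤ c + 1) :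
    ∀ Q (u : Fin n → ℕ), a * Q + a * M ≤ (∑ j, w j * u j) + a * c →
      ∃ (v : Fin n → ℕ) (z : ℕ), (∀ j, v j ≤ u j) ∧ z ≤ c ∧
        (∑ j, w j * v j) + a * z = a * Q := by
  intro Q
  induction Q using Nat.strong_induction_on with
  | _ Q ih =>
    intro u hinv
    by_cases hQc : Q ≤ c
    · exact ⟨fun _ => 0, Q, fun j => Nat.zero_le _, hQc, by simp⟩
    · push_neg at hQc
      have hMQ : M ≤ Q := by omega
      have hcQ : a * c + a ≤ a * Q := by
        have : a * (c + 1) ≤ a * Q := Nat.mul_le_mul_left a hQc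
        rw [Nat.mul_add, Nat.mul_one] at this; exact this
      have hS : a * M + a ≤ ∑ j, w j * u j := by omega
      have hNa : a ≤ ∑ j, u j := by
        have h1 : ∑ j, w j * u j ≤ M * ∑ j, u j := by
          rw [Finset.mul_sum]
          exact Finset.sum_le_sum fun j _ => Nat.mul_le_mul_right _ (hMle j)
        have h2 : M * a < M * ∑ j, u j := by
          have : a * M = M * a := Nat.mul_comm _ _
          omega
        exact le_of_lt (Nat.lt_of_mul_lt_mul_left h2)
      obtain ⟨x, y, hxu, hy1, hyM, hxsum⟩ := extract w u a M ha hw hMle hNa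
      have hyQ : y ≤ Q := le_trans hyM hMQ
      set u' : Fin n → ℕ := fun j => u j - x j with hu'
      have hwsub : ∑ j, w j * u' j + a * y = ∑ j, w j * u j := by
        rw [← hxsum, ← Finset.sum_add_distrib]
        refine Finset.sum_congr rfl fun j _ => ?_
        rw [← Nat.mul_add, Nat.sub_add_cancel (hxu j)]
      have haQy : a * (Q - y) + a * y = a * Q := by
        rw [← Nat.mul_add, Nat.sub_add_cancel hyQ]
      have hinv' : a * (Q - y) + a * M ≤ (∑ j, w j * u' j) + a * c := by
        linarith [hinv, hwsub, haQy]
      obtain ⟨v, z, hvu, hzc, hvz⟩ := ih (Q - y) (by omega) u' hinv'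
      refine ⟨fun j => v j + x j, z, ?_, hzc, ?_⟩
      · intro j
        have h1 := hvu j
        have h2 := hxu j
        have h3 : u' j = u j - x j := rfl
        rw [h3] at h1
        show v j + x j ≤ u j
        omega
      · have hsplit : ∑ j, w j * (v j + x j) = ∑ j, w j * v j + ∑ j, w j * x j := by
          rw [← Finset.sum_add_distrib]
          exact Finset.sum_congr rfl fun j _ => Nat.mul_add _ _ _
        rw [hsplit, hxsum]
        linarith [hvz, haQy]

end Aux

theorem bubble_dot_le_max_sub_two_mul_sum {n : ℕ} (hn : 0 < n) (w : Fin n → ℕ)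
    (hw : ∀ i, 0 < w i) (u : Fin n → ℕ) (hu : IsBubble w u) :
    (dotW w u : ℤ) ≤ (((Finset.univ.sup w : ℕ) : ℤ) - 2) * ((∑ i, w i : ℕ) : ℤ) := by
  set M : ℕ := Finset.univ.sup w with hM
  have hMle : ∀ j, w j ≤ M := fun j => Finset.le_sup (Finset.mem_univ j)
  have hM1 : 0 < M := lt_of_lt_of_le (hw ⟨0, hn⟩) (hMle ⟨0, hn⟩)
  obtain ⟨hT, hno⟩ := hu
  -- key claim: every coordinate satisfies u i + 1 < M
  have key : ∀ i, ¬ (M ≤ u i + 1) := by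
    intro i hMi
    set a : ℕ := w i with hadef
    have ha : 0 < a := hw i
    have had : a ∣ lcmW w := Finset.dvd_lcm (Finset.mem_univ i)
    set Q : ℕ := lcmW w / a with hQdef
    have haQ : a * Q = lcmW w := Nat.mul_div_cancel' had
    by_cases hcQ : Q ≤ u i
    · apply hno
      refine ⟨fun j => if j = i then Q else 0, ?_, ?_⟩
      · intro j
        by_cases hj : j = i
        · subst hj; simpa using hcQ
        · simp [hj]
      · unfold dotW
        rw [← haQ]
        rw [Finset.sum_congr rfl (fun j _ => by
          by_cases hj : j = i
          · subst hj; simp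
          · simp [hj] : ∀ j ∈ Finset.univ,
            w j * (if j = i then Q else 0) = if j = i then w i * Q else 0)]
        simp [hadef]
    · push_neg at hcQ
      have hMQ : M ≤ Q := by omega
      set u' : Fin n → ℕ := Function.update u i 0 with hu'
      have hsum' : ∑ j, w j * u' j + a * u i = ∑ j, w j * u j := by
        rw [Finset.sum_congr rfl (fun j _ => rfl : ∀ j ∈ Finset.univ,
          w j * u' j = w j * u' j)]
        rw [← Finset.sum_erase_add Finset.univ (fun j => w j * u j) (Finset.mem_univ i)]
        rw [← Finset.sum_erase_add Finset.univ (fun j => w j * u' j) (Finset.mem_univ i)]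
        have h1 : u' i = 0 := Function.update_self i 0 u
        have h2 : ∀ j ∈ Finset.univ.erase i, w j * u' j = w j * u j := by
          intro j hj
          have := Finset.ne_of_mem_erase hj
          rw [hu', Function.update_of_ne this]
        rw [Finset.sum_congr rfl h2, h1]
        ring
      have hinv : a * Q + a * M ≤ (∑ j, w j * u' j) + a * (u i) := by
        have h2d : 2 * (a * Q) ≤ ∑ j, w j * u j := by rw [haQ]; exact hT
        have hQM : a * M ≤ a * Q := Nat.mul_le_mul_left a hMQ
        omega
      obtain ⟨v, z, hvu, hzc, hvz⟩ :=
        reach_lemma w a M (u i) ha hM1 hw hMle hMi Q u' hinv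
      apply hno
      refine ⟨Function.update v i z, ?_, ?_⟩
      · intro j
        by_cases hj : j = i
        · subst hj; simpa using hzc
        · rw [Function.update_of_ne hj]
          have := hvu j
          rwa [hu', Function.update_of_ne hj] at this
      · unfold dotW
        rw [← Finset.sum_erase_add Finset.univ _ (Finset.mem_univ i)]
        have h2 : ∀ j ∈ Finset.univ.erase i,
            w j * (Function.update v i z) j = w j * v j := by
          intro j hj
          rw [Function.update_of_ne (Finset.ne_of_mem_erase hj)]
        rw [Finset.sum_congr rfl h2, Function.update_self]
        have hvi : v i = 0 := by
          have := hvu i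
          rw [hu', Function.update_self] at this
          omega
        have hsplit : ∑ j, w j * v j
            = ∑ j ∈ Finset.univ.erase i, w j * v j + w i * v i :=
          (Finset.sum_erase_add Finset.univ _ (Finset.mem_univ i)).symm
        rw [hvi, Nat.mul_zero, Nat.add_zero] at hsplit
        rw [← hsplit, ← haQ, ← hadef]
        omega
  -- conclude
  have hui : ∀ i, (u i : ℤ) ≤ (M : ℤ) - 2 := by
    intro i
    have := key i
    have h2 : u i + 2 ≤ M := by omega
    have := (Nat.cast_le (α := ℤ)).mpr h2
    push_cast at this
    omega
  unfold dotW
  push_cast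
  calc (∑ i, (w i : ℤ) * (u i : ℤ)) ≤ ∑ i, (w i : ℤ) * ((M : ℤ) - 2) := by
        refine Finset.sum_le_sum fun i _ => ?_
        exact mul_le_mul_of_nonneg_left (hui i) (by positivity)
    _ = ((M : ℤ) - 2) * ∑ i, (w i : ℤ) := by
        rw [Finset.mul_sum]
        exact Finset.sum_congr rfl fun i _ => mul_comm _ _
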